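/- If the rejection set R consists of the r smallest p-values (r ≥ k) and no non-consecutive variant helps: for sorted p-values p_{π(1)} ≤ ... ≤ p_{π(m)} and the generalized Bonferroni test, if the rank-consecutive marginal set M = {π(r-k+1),...,π(r)} fails the Domino condition, then every k-element set M' ⊆ {π(r-k+1),...,π(m)} whose minimal-rank element is π(r-k+1) also fails the Domino condition. -/

import Mathlib

-- elements of drop are ≥ get i
lemma sorted_get_le_of_mem_drop {L : List ℝ} (hL : L.Pairwise (· ≤ ·)) {i : ℕ} (hi : i < L.length)
    {a : ℝ} (ha : a ∈ L.drop i) : L.get ⟨i, hi⟩ ≤ a := by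
  obtain ⟨j, rfl⟩ := List.mem_iff_get.mp ha
  have hij : i + j.1 < L.length := by have := j.2; simp at this; omega
  have : (L.drop i).get j = L.get ⟨i + j.1, hij⟩ := by
    simp
  rw [this]
  exact hL.rel_get_of_le (by simp)

lemma sorted_mem_take_le {L : List ℝ} (hL : L.Pairwise (· ≤ ·)) {n : ℕ} (hn : n ≤ L.length)
    (hn0 : 0 < n) {a : ℝ} (ha : a ∈ L.take n) : a ≤ L.get ⟨n - 1, by omega⟩ := by
  obtain ⟨j, rfl⟩ := List.mem_iff_get.mp ha
  have hj : j.1 < n := by have := j.2; simp at this; omega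
  have hjL : j.1 < L.length := by omega
  have : (L.take n).get j = L.get ⟨j.1, hjL⟩ := by
    simp
  rw [this]
  exact hL.rel_get_of_le (by simp; omega)

example : True := trivial

open Classical in
-- countP (< v) where v = L.get (i) is ≤ i for sorted L
lemma countP_lt_get_le {L : List ℝ} (hL : L.Pairwise (· ≤ ·)) {i : ℕ} (hi : i < L.length) :
    L.countP (fun x => decide (x < L.get ⟨i, hi⟩)) ≤ i := by
  set v := L.get ⟨i, hi⟩ with hv
  have hsplit : L = L.take i ++ L.drop i := (List.take_append_drop i L).symm
  rw [hsplit, List.countP_append] at *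
  have h1 : (L.take i).countP (fun x => decide (x < v)) ≤ i := by
    calc (L.take i).countP _ ≤ (L.take i).length := List.countP_le_length
    _ ≤ i := by simp
  have h2 : (L.drop i).countP (fun x => decide (x < v)) = 0 := by
    refine List.countP_eq_zero.mpr fun a ha => ?_
    simp only [decide_eq_true_eq, not_lt]
    exact sorted_get_le_of_mem_drop hL hi ha
  omega

open Classical in
lemma le_countP_of_get_lt {L : List ℝ} (hL : L.Pairwise (· ≤ ·)) {i : ℕ} (hi : i < L.length)
    {v : ℝ} (h : L.get ⟨i, hi⟩ < v) :
    i + 1 ≤ L.countP (fun x => decide (x < v)) := by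
  have hsplit : L = L.take (i+1) ++ L.drop (i+1) := (List.take_append_drop _ L).symm
  rw [hsplit, List.countP_append]
  have h1 : (L.take (i+1)).countP (fun x => decide (x < v)) = (L.take (i+1)).length := by
    rw [List.countP_eq_length]
    intro a ha
    simp only [decide_eq_true_eq]
    have : a ≤ L.get ⟨i+1-1, by omega⟩ := sorted_mem_take_le hL (by omega) (by omega) ha
    simp at this
    calc a ≤ L.get ⟨i, hi⟩ := this
    _ < v := h
  rw [h1]
  have : (L.take (i+1)).length = i+1 := by simp; omega
  omega

open Classical in
lemma getD_sort_mono_add (A B : Multiset ℝ) (i : ℕ) (hi : i < Multiset.card A)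
    (hB : ∀ b ∈ B, (A.sort (· ≤ ·)).getD i 0 ≤ b) :
    (A.sort (· ≤ ·)).getD i 0 ≤ ((A + B).sort (· ≤ ·)).getD i 0 := by
  set L := A.sort (· ≤ ·) with hLdef
  set L' := (A + B).sort (· ≤ ·) with hL'def
  have hLlen : L.length = Multiset.card A := Multiset.length_sort _
  have hL'len : L'.length = Multiset.card A + Multiset.card B := by
    rw [hL'def, Multiset.length_sort, Multiset.card_add]
  have hiL : i < L.length := by omega
  have hiL' : i < L'.length := by omega
  have hgd : L.getD i 0 = L.get ⟨i, hiL⟩ := by rw [List.getD_eq_getElem?_getD, List.getElem?_eq_getElem hiL]; rfl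
  rw [hgd, List.getD_eq_getElem?_getD, List.getElem?_eq_getElem hiL']
  set v := L.get ⟨i, hiL⟩ with hv
  by_contra hcon
  push_neg at hcon
  have h1 : i + 1 ≤ L'.countP (fun x => decide (x < v)) :=
    le_countP_of_get_lt (Multiset.pairwise_sort _ _) hiL' hcon
  have hA : L.countP (fun x => decide (x < v)) ≤ i := countP_lt_get_le (Multiset.pairwise_sort _ _) hiL
  have hcA : Multiset.countP (fun x => x < v) A = L.countP (fun x => decide (x < v)) := by
    conv_lhs => rw [← Multiset.sort_eq A (· ≤ ·)]
    rw [Multiset.coe_countP]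
  have hcB : Multiset.countP (fun x => x < v) B = 0 := by
    rw [Multiset.countP_eq_zero]
    intro a ha
    exact not_lt.mpr (hgd ▸ hB a ha)
  have hcAB : Multiset.countP (fun x => x < v) (A + B) = L'.countP (fun x => decide (x < v)) := by
    conv_lhs => rw [← Multiset.sort_eq (A + B) (· ≤ ·)]
    rw [Multiset.coe_countP]
  have : L'.countP (fun x => decide (x < v)) ≤ i := by
    rw [← hcAB, Multiset.countP_add, hcA, hcB]
    omega
  omega

open Classical in
lemma getD_sort_le_of_sub (A C : Multiset ℝ) (hCA : C ≤ A) (i : ℕ)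
    (hC : i + 1 ≤ Multiset.card C) (c : ℝ) (hc : ∀ x ∈ C, x ≤ c)
    (hiA : i < Multiset.card A) :
    (A.sort (· ≤ ·)).getD i 0 ≤ c := by
  set L := A.sort (· ≤ ·) with hLdef
  have hLlen : L.length = Multiset.card A := Multiset.length_sort _
  have hiL : i < L.length := by omega
  rw [List.getD_eq_getElem?_getD, List.getElem?_eq_getElem hiL]
  by_contra hcon
  push_neg at hcon
  have h1 : i + 1 ≤ Multiset.countP (fun x => x ≤ c) A := by
    calc i + 1 ≤ Multiset.card C := hC
    _ = Multiset.countP (fun x => x ≤ c) C := (Multiset.countP_eq_card.mpr hc).symm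
    _ ≤ _ := Multiset.countP_le_of_le _ hCA
  have hcA : Multiset.countP (fun x => x ≤ c) A = L.countP (fun x => decide (x ≤ c)) := by
    conv_lhs => rw [← Multiset.sort_eq A (· ≤ ·)]
    rw [Multiset.coe_countP]
  have h2 : L.countP (fun x => decide (x ≤ c)) ≤ i := by
    have hsplit : L = L.take i ++ L.drop i := (List.take_append_drop i L).symm
    rw [hsplit, List.countP_append]
    have ht : (L.take i).countP (fun x => decide (x ≤ c)) ≤ i := by
      calc (L.take i).countP _ ≤ (L.take i).length := List.countP_le_length
      _ ≤ i := by simp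
    have hd : (L.drop i).countP (fun x => decide (x ≤ c)) = 0 := by
      refine List.countP_eq_zero.mpr fun a ha => ?_
      simp only [decide_eq_true_eq, not_le]
      calc c < L.get ⟨i, hiL⟩ := hcon
      _ ≤ a := sorted_get_le_of_mem_drop (Multiset.pairwise_sort _ _) hiL ha
    omega
  omega



open Finset

/-- If the rank-consecutive marginal set M = {r-k+1,...,r} fails the (generalized
Bonferroni) Domino condition, then so does every k-element set M' ⊆ {r-k+1,...,m}
whose minimal-rank element is r-k+1. -/
theorem stmt17 (m k r : ℕ) (p : ℕ → ℝ) (hmono : Monotone p)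
    (hk : 1 ≤ k) (hkr : k ≤ r) (hrm : r ≤ m)
    (α : ℝ) (hα : 0 < α) (hα1 : α ≤ 1)
    (hfail : ¬ (∀ S : Finset ℕ, S ⊆ Finset.Icc 1 m → Finset.Icc (r-k+1) r ⊆ S →
      ((S.card : ℝ)/(k:ℝ)) * (((S.val.map p).sort (· ≤ ·)).getD (k-1) 0) ≤ α)) :
    ∀ M' : Finset ℕ, M' ⊆ Finset.Icc (r-k+1) m → M'.card = k →
      (r-k+1) ∈ M' → (∀ i ∈ M', r-k+1 ≤ i) →
      ¬ (∀ S : Finset ℕ, S ⊆ Finset.Icc 1 m → M' ⊆ S →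
        ((S.card : ℝ)/(k:ℝ)) * (((S.val.map p).sort (· ≤ ·)).getD (k-1) 0) ≤ α) := by
  intro M' hM'sub hM'card hM'mem hM'ge
  push_neg at hfail
  obtain ⟨S, hS1, hS2, hS3⟩ := hfail
  intro hall
  classical
  set T := M' \ S with hT
  have hdisj : Disjoint S T := Finset.disjoint_sdiff
  have hunion : S ∪ M' = S.disjUnion T hdisj := by
    rw [Finset.disjUnion_eq_union, Finset.union_sdiff_self_eq_union]
  have hval : (S ∪ M').val = S.val + T.val := by rw [hunion]; rfl
  -- card of the consecutive block
  have hIcc_card : (Finset.Icc (r-k+1) r).card = k := by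
    rw [Nat.card_Icc]; omega
  have hcardS : k ≤ S.card := hIcc_card ▸ Finset.card_le_card hS2
  set v : ℝ := ((S.val.map p).sort (· ≤ ·)).getD (k-1) 0 with hv
  -- v ≤ p r
  have hvr : v ≤ p r := by
    apply getD_sort_le_of_sub (S.val.map p) ((Finset.Icc (r-k+1) r).val.map p)
      (Multiset.map_le_map (Finset.val_le_iff.mpr hS2)) (k-1) _ (p r) _ _
    · rw [Multiset.card_map]
      show k - 1 + 1 ≤ (Finset.Icc (r-k+1) r).card
      omega
    · intro x hx
      obtain ⟨j, hj, rfl⟩ := Multiset.mem_map.mp hx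
      have : j ≤ r := (Finset.mem_Icc.mp hj).2
      exact hmono this
    · rw [Multiset.card_map]
      show k - 1 < S.card
      omega
  -- elements of T have large p-values
  have hTlarge : ∀ b ∈ T.val.map p, v ≤ b := by
    intro b hb
    obtain ⟨j, hj, rfl⟩ := Multiset.mem_map.mp hb
    have hjT : j ∈ T := hj
    have hjM' : j ∈ M' := (Finset.mem_sdiff.mp hjT).1
    have hjS : j ∉ S := (Finset.mem_sdiff.mp hjT).2
    have hjlo : r - k + 1 ≤ j := hM'ge j hjM'
    have hjr : r < j := by
      by_contra h
      push_neg at h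
      exact hjS (hS2 (Finset.mem_Icc.mpr ⟨hjlo, h⟩))
    calc v ≤ p r := hvr
    _ ≤ p j := hmono hjr.le
  -- the k-th smallest over S ∪ M' is ≥ v
  have hvv' : v ≤ (((S ∪ M').val.map p).sort (· ≤ ·)).getD (k-1) 0 := by
    have heq : (S ∪ M').val.map p = S.val.map p + T.val.map p := by
      rw [hval, Multiset.map_add]
    rw [heq]
    apply getD_sort_mono_add
    · rw [Multiset.card_map]; show k - 1 < S.card; omega
    · exact hTlarge
  -- instantiate hall
  have hsub1 : S ∪ M' ⊆ Finset.Icc 1 m := by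
    apply Finset.union_subset hS1
    intro j hj
    have := Finset.mem_Icc.mp (hM'sub hj)
    exact Finset.mem_Icc.mpr ⟨by omega, this.2⟩
  have hle := hall (S ∪ M') hsub1 Finset.subset_union_right
  -- positivity of v
  have hv0 : 0 < v := by
    by_contra h
    push_neg at h
    have : ((S.card:ℝ)/(k:ℝ)) * v ≤ 0 := mul_nonpos_of_nonneg_of_nonpos (by positivity) h
    linarith
  have hcard' : (S.card : ℝ) ≤ ((S ∪ M').card : ℝ) := by
    exact_mod_cast Finset.card_le_card Finset.subset_union_left
  have hmul : ((S.card:ℝ)/(k:ℝ)) * v ≤ (((S ∪ M').card:ℝ)/(k:ℝ)) *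
      ((((S ∪ M').val.map p).sort (· ≤ ·)).getD (k-1) 0) := by
    have hk0 : (0:ℝ) < k := by exact_mod_cast hk
    apply mul_le_mul (by gcongr) hvv' hv0.le (by positivity)
  linarith
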